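/- For every admissible integer n, the transitive tournament TT_n admits a chain–collider–fork decomposition, that is, a partition of its arc set into two-element blocks each of which is a chain, a collider, or a fork. -/

import Mathlib

set_option maxRecDepth 4000


/-- The arc set of the transitive tournament `TT n` on vertices `Fin n`
(vertex `v_{i+1}` of the paper is index `i`): there is an arc `(i, j)` iff `i < j`. -/
def ttArcs (n : ℕ) : Finset (Fin n × Fin n) :=
  Finset.univ.filter fun p => p.1 < p.2

/-- A chain: a two-arc block `{(i,j), (j,k)}` with `i < j < k`. -/
def IsChainMotif {n : ℕ} (b : Finset (Fin n × Fin n)) : Prop :=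
  ∃ i j k : Fin n, i < j ∧ j < k ∧ b = {(i, j), (j, k)}

/-- A collider: a two-arc block `{(i,j), (k,j)}` with `i, k < j` and `i ≠ k`. -/
def IsColliderMotif {n : ℕ} (b : Finset (Fin n × Fin n)) : Prop :=
  ∃ i k j : Fin n, i < j ∧ k < j ∧ i ≠ k ∧ b = {(i, j), (k, j)}

/-- A fork: a two-arc block `{(i,j), (i,k)}` with `i < j`, `i < k` and `j ≠ k`. -/
def IsForkMotif {n : ℕ} (b : Finset (Fin n × Fin n)) : Prop :=
  ∃ i j k : Fin n, i < j ∧ i < k ∧ j ≠ k ∧ b = {(i, j), (i, k)}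

instance {n : ℕ} : DecidablePred (IsChainMotif (n := n)) := fun b => by
  unfold IsChainMotif; infer_instance

instance {n : ℕ} : DecidablePred (IsColliderMotif (n := n)) := fun b => by
  unfold IsColliderMotif; infer_instance

instance {n : ℕ} : DecidablePred (IsForkMotif (n := n)) := fun b => by
  unfold IsForkMotif; infer_instance

/-- `P` is a decomposition of the arc set of `TT n`: its blocks are pairwise
disjoint and their union is the whole arc set. -/
def IsTTDecomposition {n : ℕ} (P : Finset (Finset (Fin n × Fin n))) : Prop :=
  (P : Set (Finset (Fin n × Fin n))).PairwiseDisjoint id ∧ P.sup id = ttArcs n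

/-- `n` is admissible iff `n ≡ 0` or `1 (mod 4)`. -/
def Admissible (n : ℕ) : Prop := n % 4 = 0 ∨ n % 4 = 1

def pN (n : ℕ) (a : ℕ × ℕ) : ℕ × ℕ :=
  if a.2 = n - 1 ∧ a.1 % 2 = n % 2 then
    (if a.1 % 4 = n % 4 then a.1 + 2 else a.1 - 2, n - 1)
  else
    (a.1, if (a.2 - a.1) % 2 = 1 then a.2 + 1 else a.2 - 1)

lemma pN_spec (n i j : ℕ) (hadm : n % 4 = 0 ∨ n % 4 = 1) (hij : i < j) (hj : j < n) :
    (pN n (i, j)).1 < (pN n (i, j)).2 ∧ (pN n (i, j)).2 < n ∧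
    pN n (pN n (i, j)) = (i, j) ∧ pN n (i, j) ≠ (i, j) ∧
    ((pN n (i, j)).1 = i ∨ ((pN n (i, j)).2 = j ∧ (pN n (i, j)).1 ≠ i)) := by
  unfold pN
  split_ifs <;>
    simp only [Prod.mk.injEq, ne_eq, true_and, and_true, true_or, or_true, not_true,
      not_false_iff] at * <;> omega

theorem tt_ccf_decomposition_exists (n : ℕ) (hadm : Admissible n) :
    ∃ P : Finset (Finset (Fin n × Fin n)),
      IsTTDecomposition P ∧ (∀ b ∈ P, IsChainMotif b ∨ IsColliderMotif b ∨ IsForkMotif b) := by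
  obtain rfl | hn := Nat.eq_zero_or_pos n
  · refine ⟨∅, ⟨by simp, ?_⟩, by simp⟩
    simp only [Finset.sup_empty]
    exact (Finset.eq_empty_of_isEmpty _).symm
  set p : Fin n × Fin n → Fin n × Fin n := fun a =>
    (⟨(pN n (a.1.1, a.2.1)).1 % n, Nat.mod_lt _ hn⟩,
     ⟨(pN n (a.1.1, a.2.1)).2 % n, Nat.mod_lt _ hn⟩) with hp
  have hmem_iff : ∀ a : Fin n × Fin n, a ∈ ttArcs n ↔ a.1.1 < a.2.1 := by
    intro a; rw [ttArcs, Finset.mem_filter]; exact ⟨fun h => h.2, fun h => ⟨Finset.mem_univ _, h⟩⟩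
  have hval : ∀ a : Fin n × Fin n, a.1.1 < a.2.1 →
      (p a).1.1 = (pN n (a.1.1, a.2.1)).1 ∧ (p a).2.1 = (pN n (a.1.1, a.2.1)).2 := by
    intro a ha
    obtain ⟨h1, h2, -⟩ := pN_spec n a.1.1 a.2.1 hadm ha a.2.2
    exact ⟨Nat.mod_eq_of_lt (lt_trans h1 h2), Nat.mod_eq_of_lt h2⟩
  have hparc : ∀ a ∈ ttArcs n, p a ∈ ttArcs n := by
    intro a ha
    rw [hmem_iff] at ha ⊢
    obtain ⟨h1, h2, -⟩ := pN_spec n a.1.1 a.2.1 hadm ha a.2.2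
    obtain ⟨e1, e2⟩ := hval a ha
    omega
  have hinv : ∀ a ∈ ttArcs n, p (p a) = a := by
    intro a ha
    rw [hmem_iff] at ha
    obtain ⟨h1, h2, h3, -⟩ := pN_spec n a.1.1 a.2.1 hadm ha a.2.2
    obtain ⟨e1, e2⟩ := hval a ha
    have key : pN n ((p a).1.1, (p a).2.1) = (a.1.1, a.2.1) := by
      rw [e1, e2]; exact h3
    apply Prod.ext <;> apply Fin.ext
    · show (pN n ((p a).1.1, (p a).2.1)).1 % n = a.1.1
      rw [key]; exact Nat.mod_eq_of_lt a.1.2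
    · show (pN n ((p a).1.1, (p a).2.1)).2 % n = a.2.1
      rw [key]; exact Nat.mod_eq_of_lt a.2.2
  have hne : ∀ a ∈ ttArcs n, p a ≠ a := by
    intro a ha heq
    rw [hmem_iff] at ha
    obtain ⟨h1, h2, h3, h4, -⟩ := pN_spec n a.1.1 a.2.1 hadm ha a.2.2
    obtain ⟨e1, e2⟩ := hval a ha
    apply h4
    have e1' : (p a).1.1 = a.1.1 := by rw [heq]
    have e2' : (p a).2.1 = a.2.1 := by rw [heq]
    rw [e1] at e1'
    rw [e2] at e2'
    exact Prod.ext e1' e2'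
  have hmot : ∀ a ∈ ttArcs n, IsColliderMotif {a, p a} ∨ IsForkMotif {a, p a} := by
    intro a ha
    have ha' := (hmem_iff a).mp ha
    have hpa' := (hmem_iff (p a)).mp (hparc a ha)
    have hne' := hne a ha
    obtain ⟨h1, h2, h3, h4, h5⟩ := pN_spec n a.1.1 a.2.1 hadm ha' a.2.2
    obtain ⟨e1, e2⟩ := hval a ha'
    rcases h5 with hf | ⟨hc2, hc1⟩
    · right
      have htail : (p a).1 = a.1 := Fin.ext (by rw [e1, hf])
      refine ⟨a.1, a.2, (p a).2, ha', Fin.lt_def.mpr (by omega), ?_, ?_⟩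
      · intro h
        exact hne' (Prod.ext htail h.symm)
      · have e : ((a.1 : Fin n), (p a).2) = p a := by rw [← htail]
        rw [e]
    · left
      have hhead : (p a).2 = a.2 := Fin.ext (by rw [e2, hc2])
      refine ⟨a.1, (p a).1, a.2, ha', Fin.lt_def.mpr (by omega), ?_, ?_⟩
      · intro h
        exact hc1 (by rw [← e1, ← h])
      · have e : ((p a).1, (a.2 : Fin n)) = p a := by rw [← hhead]
        rw [e]
  refine ⟨(ttArcs n).image fun a => {a, p a}, ⟨?_, ?_⟩, ?_⟩
  · -- pairwise disjoint
    intro x hx y hy hxy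
    simp only [Finset.coe_image, Set.mem_image, Finset.mem_coe] at hx hy
    obtain ⟨a, ha, rfl⟩ := hx
    obtain ⟨b, hb, rfl⟩ := hy
    rw [Function.onFun, Finset.disjoint_left]
    intro c hc1 hc2
    apply hxy
    simp only [id, Finset.mem_insert, Finset.mem_singleton] at hc1 hc2
    have key : ({a, p a} : Finset (Fin n × Fin n)) = {b, p b} := by
      rcases hc1 with rfl | rfl
      · rcases hc2 with rfl | rfl
        · rfl
        · rw [hinv b hb, Finset.pair_comm]
      · rcases hc2 with h | h
        · rw [← h, hinv a ha, Finset.pair_comm]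
        · have : a = b := by
            have := congrArg p h
            rwa [hinv a ha, hinv b hb] at this
          rw [this]
    exact key
  · -- sup is the arc set
    apply le_antisymm
    · apply Finset.sup_le
      intro b hb
      simp only [Finset.mem_image] at hb
      obtain ⟨a, ha, rfl⟩ := hb
      intro c hc
      simp only [id, Finset.mem_insert, Finset.mem_singleton] at hc
      rcases hc with rfl | rfl
      · exact ha
      · exact hparc a ha
    · intro x hx
      rw [Finset.mem_sup]
      exact ⟨{x, p x}, Finset.mem_image_of_mem _ hx, by simp⟩
  · -- motifs
    intro b hb
    simp only [Finset.mem_image] at hb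
    obtain ⟨a, ha, rfl⟩ := hb
    rcases hmot a ha with h | h
    · exact Or.inr (Or.inl h)
    · exact Or.inr (Or.inr h)
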